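/- Let N ≥ 2 and let a = x₁ < x₂ < ⋯ < x_N = b with values y₁ ≤ y₂ ≤ ⋯ ≤ y_N, cell areas a_i = (x_{i+1} − x_i)(y_{i+1} − y_i) for 1 ≤ i ≤ N − 1, and total area A = Σ_{i=1}^{N−1} a_i. Let i₊ be an index attaining the maximal area a₊ = max_i a_i. If the cell [x_{i₊}, x_{i₊+1}] is split at its midpoint m = (x_{i₊} + x_{i₊+1})/2 with any value y_m satisfying y_{i₊} ≤ y_m ≤ y_{i₊+1}, then the total area A' of the resulting dataset with N + 1 points satisfies A' = A − a₊/2, and consequently A' ≤ A · (1 − 1/(2(N − 1))). -/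

import Mathlib

open Finset

/-- Splitting the cell of maximal area at its midpoint removes exactly half of
the maximal area from the total area, hence contracts the total area by the
factor `1 - 1/(2(N-1))`. -/
theorem split_max_cell_area (N : ℕ) (hN : 2 ≤ N) (a b : ℝ)
    (x y : ℕ → ℝ)
    (hxa : x 0 = a) (hxb : x (N - 1) = b)
    (hx : ∀ i, i < N - 1 → x i < x (i + 1))
    (hy : ∀ i, i < N - 1 → y i ≤ y (i + 1))
    (area : ℕ → ℝ) (harea : ∀ i, area i = (x (i + 1) - x i) * (y (i + 1) - y i))
    (A : ℝ) (hA : A = ∑ i ∈ Finset.range (N - 1), area i)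
    (iMax : ℕ) (hiMax : iMax < N - 1)
    (amax : ℝ) (hamax : amax = (Finset.range (N - 1)).sup'
      (Finset.nonempty_range_iff.mpr (by omega)) area)
    (hattain : area iMax = amax)
    (m : ℝ) (hm : m = (x iMax + x (iMax + 1)) / 2)
    (ym : ℝ) (hym₁ : y iMax ≤ ym) (hym₂ : ym ≤ y (iMax + 1))
    -- the new dataset with N + 1 points obtained by splitting cell iMax at m
    (x' y' : ℕ → ℝ)
    (hx' : ∀ j, x' j = if j ≤ iMax then x j else if j = iMax + 1 then m else x (j - 1))
    (hy' : ∀ j, y' j = if j ≤ iMax then y j else if j = iMax + 1 then ym else y (j - 1))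
    (A' : ℝ) (hA' : A' = ∑ j ∈ Finset.range N, (x' (j + 1) - x' j) * (y' (j + 1) - y' j)) :
    A' = A - amax / 2 ∧ A' ≤ A * (1 - 1 / (2 * ((N : ℝ) - 1))) := by
  have hK1 : 1 ≤ N - 1 := by omega
  set K := N - 1 with hKdef
  have hNK : N = K + 1 := by omega
  set t : ℕ → ℝ := fun j => (x' (j + 1) - x' j) * (y' (j + 1) - y' j) with ht
  -- Part 1
  have key : A' = A - area iMax / 2 := by
    have split' : A' = (∑ j ∈ Finset.Ico 0 iMax, t j) + t iMax + t (iMax + 1)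
        + ∑ j ∈ Finset.Ico (iMax + 2) (K + 1), t j := by
      rw [hA', hNK, Finset.range_eq_Ico,
        ← Finset.sum_Ico_consecutive _ (Nat.zero_le iMax) (by omega : iMax ≤ K + 1),
        Finset.sum_eq_sum_Ico_succ_bot (by omega : iMax < K + 1) t,
        Finset.sum_eq_sum_Ico_succ_bot (by omega : iMax + 1 < K + 1) t]
      ring
    have splitA : A = (∑ j ∈ Finset.Ico 0 iMax, area j) + area iMax
        + ∑ j ∈ Finset.Ico (iMax + 1) K, area j := by
      rw [hA, Finset.range_eq_Ico,
        ← Finset.sum_Ico_consecutive _ (Nat.zero_le iMax) (by omega : iMax ≤ K),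
        Finset.sum_eq_sum_Ico_succ_bot (by omega : iMax < K) area]
      ring
    have h1 : ∑ j ∈ Finset.Ico 0 iMax, t j = ∑ j ∈ Finset.Ico 0 iMax, area j := by
      refine Finset.sum_congr rfl fun j hj => ?_
      simp only [Finset.mem_Ico] at hj
      simp only [ht, hx', hy', harea, if_pos (by omega : j ≤ iMax),
        if_pos (by omega : j + 1 ≤ iMax)]
    have h2 : ∑ j ∈ Finset.Ico (iMax + 2) (K + 1), t j
        = ∑ j ∈ Finset.Ico (iMax + 1) K, area j := by
      rw [Finset.sum_Ico_eq_sum_range, Finset.sum_Ico_eq_sum_range]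
      have hcard : K + 1 - (iMax + 2) = K - (iMax + 1) := by omega
      rw [hcard]
      refine Finset.sum_congr rfl fun k _ => ?_
      have e1 : iMax + 2 + k + 1 - 1 = iMax + 1 + k + 1 := by omega
      have e2 : iMax + 2 + k - 1 = iMax + 1 + k := by omega
      simp only [ht, hx', hy', harea, e1, e2]
      split_ifs <;> first | (exfalso; omega) | ring
    have hmid : t iMax + t (iMax + 1) = area iMax / 2 := by
      have e : iMax + 1 + 1 - 1 = iMax + 1 := by omega
      simp only [ht, hx', hy', harea, e, hm]
      split_ifs <;> first | (exfalso; omega) | ring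
    rw [split', h1, h2, splitA]
    linarith [hmid]
  refine ⟨by rw [key, hattain], ?_⟩
  -- Part 2
  have hub : A ≤ (K : ℝ) * amax := by
    rw [hA]
    calc ∑ i ∈ Finset.range K, area i ≤ ∑ _i ∈ Finset.range K, amax := by
          refine Finset.sum_le_sum fun i hi => ?_
          rw [hamax]
          exact Finset.le_sup' area hi
      _ = (K : ℝ) * amax := by
          rw [Finset.sum_const, Finset.card_range, nsmul_eq_mul]
  have hKpos : (0 : ℝ) < (K : ℝ) := by
    exact_mod_cast Nat.lt_of_lt_of_le Nat.zero_lt_one hK1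
  have hNcast : ((N : ℝ) - 1) = (K : ℝ) := by
    rw [hNK]; push_cast; ring
  rw [key, hattain, hNcast]
  have expand : A * (1 - 1 / (2 * (K : ℝ))) = A - A / (2 * (K : ℝ)) := by
    field_simp
  rw [expand]
  have hdiv : A / (2 * (K : ℝ)) ≤ amax / 2 := by
    rw [div_le_div_iff₀ (by positivity) (by norm_num)]
    nlinarith [hub]
  linarith
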